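/- Let p be an odd prime, g ≥ 1 with g ≤ (p−1)/2, 1 ≤ i ≤ g, 1 ≤ j ≤ g. Let c_{ip−j} ∈ 𝔽_p[z₁,…,z_{2g−1}] be the coefficient of x^{ip−j} in (x(x−1)∏_{k=1}^{2g−1}(x−z_k))^{(p−1)/2}. Then c_{ip−j} is annihilated by the operator E_{ℓm} = (z_ℓ − z_m)∂_ℓ∂_m + (1/2)∂_m − (1/2)∂_ℓ for all 1 ≤ ℓ < m ≤ 2g−1, where 1/2 = (p+1)/2 ∈ 𝔽_p. -/

import Mathlib

set_option synthInstance.maxHeartbeats 1000000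
set_option maxHeartbeats 4000000
set_option linter.unusedVariables false

open MvPolynomial

section AuxCartierManin

variable {σ : Type*} {R : Type*} [CommRing R]

noncomputable def Dc (t : σ) :
    Derivation R (Polynomial (MvPolynomial σ R)) (Polynomial (MvPolynomial σ R)) :=
  PolynomialModule.equivPolynomialSelf.compDer ((MvPolynomial.pderiv t).mapCoeffs)

lemma Dc_coeff (t : σ) (f : Polynomial (MvPolynomial σ R)) (k : ℕ) :
    (Dc t f).coeff k = pderiv t (f.coeff k) := rfl

lemma Dc_X (t : σ) : Dc t (Polynomial.X : Polynomial (MvPolynomial σ R)) = 0 := by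
  ext k
  rw [Dc_coeff, Polynomial.coeff_X]
  split <;> simp

lemma Dc_C (t : σ) (a : MvPolynomial σ R) :
    Dc t (Polynomial.C a) = Polynomial.C (pderiv t a) := by
  ext k
  rw [Dc_coeff, Polynomial.coeff_C, Polynomial.coeff_C]
  split <;> simp

lemma Dc_one (t : σ) : Dc t (1 : Polynomial (MvPolynomial σ R)) = 0 :=
  (Dc t).map_one_eq_zero

lemma Dc_prod_eq_zero {ι : Type*} (t : σ) (s : Finset ι)
    (F : ι → Polynomial (MvPolynomial σ R)) (h : ∀ x ∈ s, Dc t (F x) = 0) :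
    Dc t (∏ x ∈ s, F x) = 0 := by
  classical
  induction s using Finset.induction_on with
  | empty => simp [Dc_one t]
  | insert x s hx ih =>
    rw [Finset.prod_insert hx, Derivation.leibniz, h _ (Finset.mem_insert_self _ _),
      ih fun x hxs => h x (Finset.mem_insert_of_mem hxs)]
    simp

lemma Dc_X_sub_C (t u : σ) :
    Dc t (Polynomial.X - Polynomial.C (MvPolynomial.X u) : Polynomial (MvPolynomial σ R))
      = -Polynomial.C (pderiv t (MvPolynomial.X u : MvPolynomial σ R)) := by
  rw [Derivation.map_sub, Dc_X, Dc_C]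
  simp

/-- Abstract algebraic core of the computation. -/
lemma aux_identity {A : Type*} [CommRing A] [Algebra R A]
    (Dl Dm : Derivation R A A) (a b G ch : A) (M : ℕ)
    (hla : Dl a = -1) (hlb : Dl b = 0) (hlG : Dl G = 0)
    (hma : Dm a = 0) (hmb : Dm b = -1) (hmG : Dm G = 0)
    (hsum : ((M + 2 : ℕ) : A) + ch = 0) :
    (b - a) * Dl (Dm ((b * (a * G)) ^ (M + 2)))
      + ch * Dm ((b * (a * G)) ^ (M + 2))
      - ch * Dl ((b * (a * G)) ^ (M + 2)) = 0 := by
  have e1 : M + 2 - 1 = M + 1 := by omega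
  have e2 : M + 1 - 1 = M := by omega
  have hDmP : Dm (b * (a * G)) = -(a * G) := by
    rw [Derivation.leibniz, Derivation.leibniz, hma, hmG, hmb]
    simp only [smul_eq_mul, smul_zero, mul_zero, zero_add, add_zero]
    ring
  have hDlP : Dl (b * (a * G)) = -(b * G) := by
    rw [Derivation.leibniz, Derivation.leibniz, hla, hlG, hlb]
    simp only [smul_eq_mul, smul_zero, mul_zero, zero_add, add_zero]
    ring
  have hDmf : Dm ((b * (a * G)) ^ (M + 2))
      = -(((M + 2 : ℕ) : A) * ((b * (a * G)) ^ (M + 1) * (a * G))) := by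
    rw [Derivation.leibniz_pow, hDmP, e1]
    simp only [nsmul_eq_mul, smul_eq_mul]
    ring
  have hDlf : Dl ((b * (a * G)) ^ (M + 2))
      = -(((M + 2 : ℕ) : A) * ((b * (a * G)) ^ (M + 1) * (b * G))) := by
    rw [Derivation.leibniz_pow, hDlP, e1]
    simp only [nsmul_eq_mul, smul_eq_mul]
    ring
  have hDlmf : Dl (Dm ((b * (a * G)) ^ (M + 2)))
      = ((M + 2 : ℕ) : A) * (((M + 2 : ℕ) : A) * ((b * (a * G)) ^ (M + 1) * G)) := by
    rw [hDmf, Derivation.map_neg, Derivation.leibniz, Derivation.map_natCast,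
      Derivation.leibniz, Derivation.leibniz_pow, hDlP, Derivation.leibniz, hlG, hla, e2]
    simp only [nsmul_eq_mul, smul_eq_mul, smul_zero, mul_zero, zero_add, add_zero]
    push_cast
    ring
  rw [hDlmf, hDmf, hDlf]
  linear_combination ((M + 2 : ℕ) : A) * ((b * (a * G)) ^ (M + 1) * G) * (b - a) * hsum

lemma key_identity [Fintype σ] [DecidableEq σ] (ℓ m : σ) (hne : ℓ ≠ m) (M : ℕ) (h : R)
    (hsum : ((M + 2 : ℕ) : R) + h = 0) :
    Polynomial.C (MvPolynomial.X ℓ - MvPolynomial.X m) *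
        Dc ℓ (Dc m ((Polynomial.X * (Polynomial.X - 1)
          * ∏ t : σ, (Polynomial.X - Polynomial.C (MvPolynomial.X t))) ^ (M + 2)))
      + Polynomial.C (MvPolynomial.C h) * Dc m ((Polynomial.X * (Polynomial.X - 1)
          * ∏ t : σ, (Polynomial.X - Polynomial.C (MvPolynomial.X t))) ^ (M + 2))
      - Polynomial.C (MvPolynomial.C h) * Dc ℓ ((Polynomial.X * (Polynomial.X - 1)
          * ∏ t : σ, (Polynomial.X - Polynomial.C (MvPolynomial.X t))) ^ (M + 2))
      = 0 := by
  have hP : (Polynomial.X * (Polynomial.X - 1)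
      * ∏ t : σ, (Polynomial.X - Polynomial.C (MvPolynomial.X t))
      : Polynomial (MvPolynomial σ R))
      = ((Polynomial.X - Polynomial.C (MvPolynomial.X m))
        * ((Polynomial.X - Polynomial.C (MvPolynomial.X ℓ))
          * (Polynomial.X * (Polynomial.X - 1)
            * ∏ t ∈ (Finset.univ.erase m).erase ℓ,
                (Polynomial.X - Polynomial.C (MvPolynomial.X t))))
        : Polynomial (MvPolynomial σ R)) := by
    rw [← Finset.mul_prod_erase Finset.univ _ (Finset.mem_univ m),
      ← Finset.mul_prod_erase (Finset.univ.erase m) _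
        (Finset.mem_erase.mpr ⟨hne, Finset.mem_univ ℓ⟩)]
    ring
  have hz : (Polynomial.C (MvPolynomial.X ℓ - MvPolynomial.X m)
      : Polynomial (MvPolynomial σ R))
      = ((Polynomial.X - Polynomial.C (MvPolynomial.X m))
        - (Polynomial.X - Polynomial.C (MvPolynomial.X ℓ))
        : Polynomial (MvPolynomial σ R)) := by
    rw [Polynomial.C_sub]; ring
  have hDG : ∀ t : σ, (t = ℓ ∨ t = m) →
      Dc t (Polynomial.X * (Polynomial.X - 1)
        * ∏ u ∈ (Finset.univ.erase m).erase ℓ,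
            (Polynomial.X - Polynomial.C (MvPolynomial.X u))
        : Polynomial (MvPolynomial σ R)) = 0 := by
    intro t ht
    rw [Derivation.leibniz, Derivation.leibniz, Derivation.map_sub, Dc_X, Dc_one,
      Dc_prod_eq_zero t _ _ (fun x hx => by
        have hx1 : x ≠ ℓ := (Finset.mem_erase.mp hx).1
        have hx2 : x ≠ m := (Finset.mem_erase.mp (Finset.mem_erase.mp hx).2).1
        rcases ht with rfl | rfl
        · rw [Dc_X_sub_C, pderiv_X_of_ne hx1]; simp
        · rw [Dc_X_sub_C, pderiv_X_of_ne hx2]; simp)]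
    simp
  have hsum' : (((M + 2 : ℕ)) : Polynomial (MvPolynomial σ R))
      + Polynomial.C (MvPolynomial.C h) = 0 := by
    have h0 : (Polynomial.C.comp MvPolynomial.C : R →+* Polynomial (MvPolynomial σ R))
        ((((M + 2 : ℕ)) : R) + h) = 0 := by rw [hsum]; simp
    rw [map_add, map_natCast, RingHom.comp_apply] at h0
    exact h0
  rw [hP, hz]
  exact aux_identity (Dc ℓ) (Dc m)
    (Polynomial.X - Polynomial.C (MvPolynomial.X ℓ))
    (Polynomial.X - Polynomial.C (MvPolynomial.X m))
    (Polynomial.X * (Polynomial.X - 1)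
      * ∏ t ∈ (Finset.univ.erase m).erase ℓ, (Polynomial.X - Polynomial.C (MvPolynomial.X t)))
    (Polynomial.C (MvPolynomial.C h)) M
    (by rw [Dc_X_sub_C, pderiv_X_self]; simp)
    (by rw [Dc_X_sub_C, pderiv_X_of_ne hne.symm]; simp)
    (hDG ℓ (Or.inl rfl))
    (by rw [Dc_X_sub_C, pderiv_X_of_ne hne]; simp)
    (by rw [Dc_X_sub_C, pderiv_X_self]; simp)
    (hDG m (Or.inr rfl))
    hsum'


end AuxCartierManin

/-- The Cartier–Manin entry `c_{ip−j}` is annihilated by the operator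
`E_{ℓm} = (z_ℓ − z_m)∂_ℓ∂_m + (1/2)∂_m − (1/2)∂_ℓ` for all `ℓ < m`,
where `1/2 = (p+1)/2` in `𝔽_p`. -/
theorem cartier_manin_annihilated_by_Elm (p : ℕ) (hp : p.Prime) (hodd : Odd p)
    (g : ℕ) (hg1 : 1 ≤ g) (hg : g ≤ (p - 1) / 2)
    (c : ℕ → MvPolynomial (Fin (2 * g - 1)) (ZMod p))
    (hc : ∀ k : ℕ, c k = Polynomial.coeff
      ((Polynomial.X * (Polynomial.X - 1)
          * ∏ t : Fin (2 * g - 1), (Polynomial.X - Polynomial.C (MvPolynomial.X t))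
        : Polynomial (MvPolynomial (Fin (2 * g - 1)) (ZMod p))) ^ ((p - 1) / 2)) k)
    (i j : ℕ) (hi1 : 1 ≤ i) (hig : i ≤ g) (hj1 : 1 ≤ j) (hjg : j ≤ g)
    (ℓ m : Fin (2 * g - 1)) (hlm : ℓ < m) :
    (MvPolynomial.X ℓ - MvPolynomial.X m) * pderiv ℓ (pderiv m (c (i * p - j)))
        + MvPolynomial.C ((((p + 1) / 2 : ℕ)) : ZMod p) * pderiv m (c (i * p - j))
        - MvPolynomial.C ((((p + 1) / 2 : ℕ)) : ZMod p) * pderiv ℓ (c (i * p - j))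
      = 0 := by
  have h1 : (ℓ : ℕ) < m := hlm
  have h2 : (m : ℕ) < 2 * g - 1 := m.isLt
  obtain ⟨M, hM⟩ : ∃ M, (p - 1) / 2 = M + 2 := ⟨(p - 1) / 2 - 2, by omega⟩
  obtain ⟨w, hw⟩ := hodd
  have hsum : ((M + 2 : ℕ) : ZMod p) + (((p + 1) / 2 : ℕ) : ZMod p) = 0 := by
    rw [← Nat.cast_add, show (M + 2) + (p + 1) / 2 = p by omega, ZMod.natCast_self]
  have hkey := key_identity (σ := Fin (2 * g - 1)) (R := ZMod p) ℓ m (ne_of_lt hlm) M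
    (((p + 1) / 2 : ℕ) : ZMod p) hsum
  have h0 := congrArg (fun q => Polynomial.coeff q (i * p - j)) hkey
  simp only [Polynomial.coeff_add, Polynomial.coeff_sub, Polynomial.coeff_C_mul,
    Polynomial.coeff_zero, Dc_coeff] at h0
  rw [hc, hM]
  exact h0
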